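/- arXiv:1509.01345 — 2 statements merged into one kernel-verified Lean document; each statement's English description precedes it below -/
import Mathlib

section
/- Let q ≥ 2 and a > 0 be real numbers, let w be a positive integer, and let δ > 0. Suppose f(u) = Σ_{n≥0} b_n u^n (with b_n ∈ ℂ) converges for all complex u with |u| < q^{−a}, that g and h are analytic on the disc {u ∈ ℂ : |u| < q^{−(a−δ)}}, that f(u) = g(u)·(u − q^{−a})^{−w} + h(u) for all |u| < q^{−a}, and that g(q^{−a}) ≠ 0. Then for every ε > 0, b_n = q^{an}·Q(n) + O(q^{(a−δ+ε)n}) as n → ∞, where Q is the degree-(w−1) polynomial Q(X) = Σ_{j=0}^{w−2} [(−1)^{w−j}·g^{(j)}(q^{−a})/(j!·(w−j−1)!)]·[∏_{k=1}^{w−j−1}(X+k)]·q^{a(w−j)} − [g^{(w−1)}(q^{−a})/(w−1)!]·q^{a}. In particular the leading coefficient of Q is (−1)^{w}·g(q^{−a})·q^{aw}/(w−1)!. -/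
open Filter Asymptotics Topology Finset
open scoped NNReal ENNReal

lemma auxChoose (n m : ℕ) : (((n + m).choose m : ℕ) : ℂ) * (m.factorial : ℂ) =
    ∏ k ∈ Finset.Icc 1 m, ((n : ℂ) + (k : ℂ)) := by
  induction m with
  | zero => simp
  | succ m ih =>
    rw [Finset.prod_Icc_succ_top (by omega), ← ih,
      show n + (m+1) = n + m + 1 from by omega]
    have hnat : (n + m + 1).choose (m+1) * (m+1) = (n + m + 1) * ((n + m).choose m) := by
      have := Nat.add_one_mul_choose_eq (n + m) m
      omega
    have hc : (((n + m + 1).choose (m+1) : ℕ) : ℂ) * ((m:ℂ)+1) =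
        ((n:ℂ) + m + 1) * (((n + m).choose m : ℕ) : ℂ) := by exact_mod_cast hnat
    rw [Nat.factorial_succ]
    push_cast
    linear_combination (m.factorial : ℂ) * hc

lemma taylorIdentity (g : ℂ → ℂ) (z₀ : ℂ) (k : ℕ) (u : ℂ) :
    g u = (∑ j ∈ Finset.range k, (Function.swap dslope z₀)^[j] g z₀ * (u - z₀) ^ j)
      + (Function.swap dslope z₀)^[k] g u * (u - z₀) ^ k := by
  induction k with
  | zero => simp
  | succ k ih =>
    rw [Finset.sum_range_succ]
    have hit : (Function.swap dslope z₀)^[k+1] g = dslope ((Function.swap dslope z₀)^[k] g) z₀ := by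
      rw [Function.iterate_succ_apply']
    have hd := sub_smul_dslope ((Function.swap dslope z₀)^[k] g) z₀ u
    rw [smul_eq_mul] at hd
    rw [hit, ih]
    linear_combination -((u - z₀) ^ k) * hd

lemma iterCoeff {g : ℂ → ℂ} {z₀ : ℂ} (hg : AnalyticAt ℂ g z₀) (k : ℕ) :
    (Function.swap dslope z₀)^[k] g z₀ = iteratedDeriv k g z₀ / (k.factorial : ℂ) := by
  obtain ⟨p, hp⟩ := hg
  have h2 := hp.has_fpower_series_iterate_dslope_fslope k
  have h3 := h2.coeff_zero (fun _ => 1)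
  have h4 : (FormalMultilinearSeries.fslope^[k] p).coeff 0 = p.coeff k := by
    simp [FormalMultilinearSeries.coeff_iterate_fslope]
  have h1 : (Function.swap dslope z₀)^[k] g z₀ = p.coeff k := by
    rw [← h3, ← h4]; rfl
  obtain ⟨t, ht⟩ := hp
  have h5 := ht.factorial_smul (1 : ℂ) k
  rw [h1, iteratedDeriv_eq_iteratedFDeriv, ← h5, nsmul_eq_mul,
    eq_div_iff (by exact_mod_cast k.factorial_ne_zero : ((k.factorial : ℕ) : ℂ) ≠ 0), mul_comm]
  rfl

lemma invPowHasSum (ρ : ℝ) (hρ : 0 < ρ) (u : ℂ) (hu : ‖u‖ < ρ) (m : ℕ) (hm : 0 < m) (A : ℂ) :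
    HasSum (fun n : ℕ => A * ((-1:ℂ)^m * ((((ρ:ℂ))^m)⁻¹ *
        ((((n + (m-1)).choose (m-1) : ℕ) : ℂ) * (((ρ:ℂ))^n)⁻¹))) * u^n)
      (A * ((u - (ρ:ℂ))^m)⁻¹) := by
  have hρc : ((ρ:ℂ)) ≠ 0 := by
    exact Complex.ofReal_ne_zero.mpr hρ.ne'
  set x : ℂ := u / (ρ:ℂ) with hx
  have hxn : ‖x‖ < 1 := by
    rw [hx, norm_div]
    rw [div_lt_one (by simpa using hρ.ne')]
    simpa [abs_of_pos hρ] using hu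
  have hx1 : (1 : ℂ) - x ≠ 0 := by
    intro hc
    have : x = 1 := by linear_combination -hc
    rw [this] at hxn; simp at hxn
  have base := hasSum_choose_mul_geometric_of_norm_lt_one (m-1) hxn
  rw [Nat.sub_add_cancel hm] at base
  have := base.mul_left (A * ((-1:ℂ)^m * (((ρ:ℂ))^m)⁻¹))
  convert this using 1
  · rfl
  · funext n
    rw [hx, div_pow, div_eq_mul_inv]
    ring
  · have h1 : u - (ρ:ℂ) = -((ρ:ℂ) * (1 - x)) := by
      rw [hx]; field_simp; ring
    rw [h1, neg_pow, mul_pow, one_div]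
    rw [mul_inv, mul_inv]
    have hneg : (((-1:ℂ))^m)⁻¹ = (-1:ℂ)^m := by
      rw [← inv_pow, inv_neg, inv_one]
    rw [hneg]
    ring

theorem stmt5 (q a δ : ℝ) (hq : 2 ≤ q) (ha : 0 < a) (hδ : 0 < δ)
    (w : ℕ) (hw : 0 < w)
    (b : ℕ → ℂ) (f g h : ℂ → ℂ)
    (hf : ∀ u : ℂ, ‖u‖ < q ^ (-a) → HasSum (fun n : ℕ => b n * u ^ n) (f u))
    (hg : ∀ u : ℂ, ‖u‖ < q ^ (-(a - δ)) → DifferentiableAt ℂ g u)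
    (hh : ∀ u : ℂ, ‖u‖ < q ^ (-(a - δ)) → DifferentiableAt ℂ h u)
    (heq : ∀ u : ℂ, ‖u‖ < q ^ (-a) →
      f u = g u * ((u - ((q ^ (-a) : ℝ) : ℂ)) ^ w)⁻¹ + h u)
    (hg0 : g ((q ^ (-a) : ℝ) : ℂ) ≠ 0) :
    ∀ ε > (0 : ℝ),
      (fun n : ℕ => b n - ((q ^ (a * (n : ℝ)) : ℝ) : ℂ) *
          ((∑ j ∈ Finset.range (w - 1),
              (-1 : ℂ) ^ (w - j) * iteratedDeriv j g ((q ^ (-a) : ℝ) : ℂ) /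
                  ((j.factorial : ℂ) * ((w - j - 1).factorial : ℂ)) *
                (∏ k ∈ Finset.Icc 1 (w - j - 1), ((n : ℂ) + (k : ℂ))) *
                ((q ^ (a * ((w - j : ℕ) : ℝ)) : ℝ) : ℂ)) -
            iteratedDeriv (w - 1) g ((q ^ (-a) : ℝ) : ℂ) / (((w - 1).factorial : ℕ) : ℂ) *
              ((q ^ a : ℝ) : ℂ)))
        =O[atTop] (fun n : ℕ => (q ^ ((a - δ + ε) * (n : ℝ)) : ℝ)) := by
  intro ε hε
  have hq0 : (0:ℝ) < q := by linarith
  have hq1 : (1:ℝ) < q := by linarith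
  set rr : ℝ := q ^ (-a) with hrrdef
  set Rr : ℝ := q ^ (-(a - δ)) with hRrdef
  have hrr0 : 0 < rr := Real.rpow_pos_of_pos hq0 _
  have hRr0 : 0 < Rr := Real.rpow_pos_of_pos hq0 _
  have hrrR : rr < Rr := by
    rw [hrrdef, hRrdef]
    exact (Real.rpow_lt_rpow_left_iff hq1).mpr (by linarith)
  set rc : ℂ := ((rr : ℝ) : ℂ) with hrcdef
  have hrcnorm : ‖rc‖ = rr := by rw [hrcdef]; simp [abs_of_pos hrr0]
  have hrcball : rc ∈ Metric.ball (0:ℂ) Rr := by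
    rw [Metric.mem_ball, dist_zero_right, hrcnorm]; exact hrrR
  have hgd : DifferentiableOn ℂ g (Metric.ball (0:ℂ) Rr) := fun u hu =>
    (hg u (by simpa [mem_ball_zero_iff] using hu)).differentiableWithinAt
  have hganal : AnalyticAt ℂ g rc := hgd.analyticAt (Metric.isOpen_ball.mem_nhds hrcball)
  obtain ⟨p, hp⟩ := id hganal
  set c : ℕ → ℂ := fun j => iteratedDeriv j g rc / (j.factorial : ℂ) with hcdef
  have hGdiff : ∀ k, ∀ u ∈ Metric.ball (0:ℂ) Rr,
      DifferentiableAt ℂ ((Function.swap dslope rc)^[k] g) u := by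
    intro k
    induction k with
    | zero =>
      intro u hu
      simpa using hg u (by simpa [mem_ball_zero_iff] using hu)
    | succ k ih =>
      intro u hu
      rcases eq_or_ne u rc with rfl | hne
      · exact (hp.has_fpower_series_iterate_dslope_fslope (k+1)).analyticAt.differentiableAt
      · rw [Function.iterate_succ_apply']
        exact (differentiableAt_dslope_of_ne hne).mpr (ih u hu)
  set F : ℂ → ℂ := fun u => h u + (Function.swap dslope rc)^[w] g u with hFdef
  have hFdiff : DifferentiableOn ℂ F (Metric.ball (0:ℂ) Rr) := by
    intro u hu
    have h1 : DifferentiableAt ℂ h u := hh u (by simpa [mem_ball_zero_iff] using hu)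
    exact (h1.add (hGdiff w u hu)).differentiableWithinAt
  -- key pointwise identity
  have hkey : ∀ u : ℂ, ‖u‖ < rr →
      f u - (∑ j ∈ Finset.range w, c j * ((u - rc)^(w-j))⁻¹) = F u := by
    intro u hu
    have hune : u ≠ rc := by
      intro hc; rw [hc, hrcnorm] at hu; exact lt_irrefl _ hu
    have hz : u - rc ≠ 0 := sub_ne_zero.mpr hune
    have hcong : ∀ j ∈ Finset.range w,
        (Function.swap dslope rc)^[j] g rc * (u - rc)^j = c j * (u - rc)^j := by
      intro j _; rw [iterCoeff hganal, hcdef]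
    have hTay : g u = (∑ j ∈ Finset.range w, c j * (u - rc)^j)
        + (Function.swap dslope rc)^[w] g u * (u - rc)^w := by
      rw [taylorIdentity g rc w u, Finset.sum_congr rfl hcong]
    have hsplitj : ∀ j ∈ Finset.range w,
        c j * ((u - rc)^(w-j))⁻¹ = c j * (u - rc)^j * ((u - rc)^w)⁻¹ := by
      intro j hj
      have hpow : (u - rc)^w = (u - rc)^j * (u - rc)^(w - j) := by
        rw [← pow_add]; congr 1
        have := Finset.mem_range.mp hj; omega
      rw [hpow, mul_inv]
      have h1 : (u - rc)^j ≠ 0 := pow_ne_zero _ hz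
      field_simp
    have hwinv : (u - rc)^w ≠ 0 := pow_ne_zero _ hz
    rw [heq u hu, Finset.sum_congr rfl hsplitj, hTay, hFdef]
    rw [add_mul, Finset.sum_mul]
    rw [mul_assoc, mul_inv_cancel₀ hwinv, mul_one]
    ring
  -- singular part power series
  set sc : ℕ → ℂ := fun n => ∑ j ∈ Finset.range w, c j * ((-1:ℂ)^(w-j) * ((rc^(w-j))⁻¹ *
      ((((n + (w-j-1)).choose (w-j-1) : ℕ) : ℂ) * (rc^n)⁻¹))) with hscdef
  have hSsum : ∀ u : ℂ, ‖u‖ < rr → HasSum (fun n => sc n * u^n)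
      (∑ j ∈ Finset.range w, c j * ((u - rc)^(w-j))⁻¹) := by
    intro u hu
    have hterm : ∀ j ∈ Finset.range w,
        HasSum (fun n => c j * ((-1:ℂ)^(w-j) * ((rc^(w-j))⁻¹ *
          ((((n + (w-j-1)).choose (w-j-1) : ℕ) : ℂ) * (rc^n)⁻¹))) * u^n)
          (c j * ((u - rc)^(w-j))⁻¹) := by
      intro j hj
      have hjw : 0 < w - j := by have := Finset.mem_range.mp hj; omega
      have := invPowHasSum rr hrr0 u hu (w-j) hjw (c j)
      rw [← hrcdef] at this
      exact this
    have h2 := hasSum_sum hterm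
    convert h2 using 1
    funext n
    simp only [hscdef]
    rw [Finset.sum_mul]
  have hbs : ∀ u : ℂ, ‖u‖ < rr → HasSum (fun n => (b n - sc n) * u^n) (F u) := by
    intro u hu
    have h1 := (hf u hu).sub (hSsum u hu)
    rw [hkey u hu] at h1
    simpa [sub_mul] using h1
  -- power series for F at 0 with coefficients b n - sc n
  have hhalf0 : (0:ℝ) < rr/2 := by linarith
  set p₁ := FormalMultilinearSeries.ofScalars ℂ (fun n => b n - sc n) with hp₁def
  have hsummt := (hbs (((rr/2 : ℝ)) : ℂ)
    (by rw [Complex.norm_real, Real.norm_eq_abs, abs_of_pos hhalf0]; linarith)).summable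
  have htend : Filter.Tendsto (fun n => ‖p₁ n‖ * (rr/2)^n) atTop (𝓝 0) := by
    have h2 := hsummt.tendsto_atTop_zero.norm
    rw [norm_zero] at h2
    have h3 : (fun n => ‖p₁ n‖ * (rr/2)^n)
        = fun n => ‖(b n - sc n) * ((rr/2 : ℝ) : ℂ)^n‖ := by
      funext n
      rw [hp₁def, FormalMultilinearSeries.ofScalars_norm, norm_mul, norm_pow,
        Complex.norm_real, Real.norm_eq_abs, abs_of_pos hhalf0]
    rw [h3]; exact h2
  set tN : ℝ≥0 := ⟨rr/2, hhalf0.le⟩ with htN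
  have hp₁ball : HasFPowerSeriesOnBall F p₁ 0 ((tN : ℝ≥0) : ℝ≥0∞) := by
    refine ⟨p₁.le_radius_of_tendsto htend, ?_, ?_⟩
    · exact_mod_cast ENNReal.coe_pos.mpr (by exact_mod_cast hhalf0)
    · intro y hy
      have hy' : ‖y‖ < rr/2 := by
        rw [EMetric.mem_ball, edist_zero_right] at hy
        exact_mod_cast hy
      have hby := hbs y (by linarith)
      have h4 : (fun n => p₁ n fun _ => y) = fun n => (b n - sc n) * y ^ n := by
        funext n
        rw [hp₁def, FormalMultilinearSeries.ofScalars_apply_eq, smul_eq_mul]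
      rw [zero_add, h4]
      exact hby
  -- Cauchy power series on a disc of radius ρ2
  set ρ2 : ℝ := q ^ (-(a - δ + ε/2)) with hρ2def
  have hρ20 : 0 < ρ2 := Real.rpow_pos_of_pos hq0 _
  have hρ2R : ρ2 < Rr := by
    rw [hρ2def, hRrdef]
    exact (Real.rpow_lt_rpow_left_iff hq1).mpr (by linarith)
  set t2N : ℝ≥0 := ⟨ρ2, hρ20.le⟩ with ht2N
  have hFd2 : DifferentiableOn ℂ F (Metric.closedBall 0 ((t2N : ℝ≥0) : ℝ)) :=
    hFdiff.mono (Metric.closedBall_subset_ball (by exact hρ2R))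
  have hp₀ball : HasFPowerSeriesOnBall F (cauchyPowerSeries F 0 t2N) 0 t2N :=
    hFd2.hasFPowerSeriesOnBall (by exact_mod_cast hρ20)
  set p₀ := cauchyPowerSeries F 0 ((t2N : ℝ≥0) : ℝ) with hp₀def
  have hpe : p₁ = p₀ := hp₁ball.hasFPowerSeriesAt.eq_formalMultilinearSeries
    hp₀ball.hasFPowerSeriesAt
  have hcoeff : ∀ n, b n - sc n = p₀.coeff n := by
    intro n
    rw [← hpe, hp₁def]
    simp [FormalMultilinearSeries.coeff, FormalMultilinearSeries.ofScalars, Pi.one_def,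
      List.ofFn_const]
  -- coefficient bound
  set ρ1 : ℝ := q ^ (-(a - δ + ε)) with hρ1def
  have hρ10 : 0 < ρ1 := Real.rpow_pos_of_pos hq0 _
  have hρ12 : ρ1 < ρ2 := by
    rw [hρ1def, hρ2def]
    exact (Real.rpow_lt_rpow_left_iff hq1).mpr (by linarith)
  set t1N : ℝ≥0 := ⟨ρ1, hρ10.le⟩ with ht1N
  have hradlt : ((t1N : ℝ≥0) : ℝ≥0∞) < p₀.radius := by
    refine lt_of_lt_of_le ?_ hp₀ball.r_le
    exact_mod_cast hρ12
  obtain ⟨C, hC0, hC⟩ := p₀.norm_mul_pow_le_of_lt_radius hradlt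
  -- identify statement's coefficient with sc
  have hrcinv : ∀ m : ℕ, (rc ^ m)⁻¹ = ((q ^ (a * (m : ℝ)) : ℝ) : ℂ) := by
    intro m
    have h1 : rr ^ m = q ^ (-(a * (m:ℝ))) := by
      rw [hrrdef, ← Real.rpow_natCast (q ^ (-a)) m, ← Real.rpow_mul hq0.le]
      congr 1; ring
    rw [hrcdef, ← Complex.ofReal_pow, h1, Real.rpow_neg hq0.le, Complex.ofReal_inv, inv_inv]
  have hsplitsum : ∀ (φ : ℕ → ℂ),
      ∑ j ∈ Finset.range w, φ j = (∑ j ∈ Finset.range (w-1), φ j) + φ (w-1) := by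
    intro φ; rw [← Finset.sum_range_succ, Nat.sub_add_cancel hw]
  have hNsc : ∀ n : ℕ,
      ((q ^ (a * (n : ℝ)) : ℝ) : ℂ) *
          ((∑ j ∈ Finset.range (w - 1),
              (-1 : ℂ) ^ (w - j) * iteratedDeriv j g rc /
                  ((j.factorial : ℂ) * ((w - j - 1).factorial : ℂ)) *
                (∏ k ∈ Finset.Icc 1 (w - j - 1), ((n : ℂ) + (k : ℂ))) *
                ((q ^ (a * ((w - j : ℕ) : ℝ)) : ℝ) : ℂ)) -
            iteratedDeriv (w - 1) g rc / (((w - 1).factorial : ℕ) : ℂ) *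
              ((q ^ a : ℝ) : ℂ)) = sc n := by
    intro n
    simp only [hscdef]
    rw [hsplitsum (fun j => c j * ((-1:ℂ)^(w-j) * ((rc^(w-j))⁻¹ *
      ((((n + (w-j-1)).choose (w-j-1) : ℕ) : ℂ) * (rc^n)⁻¹))))]
    have h1 : ∀ j ∈ Finset.range (w-1),
        c j * ((-1:ℂ)^(w-j) * ((rc^(w-j))⁻¹ *
          ((((n + (w-j-1)).choose (w-j-1) : ℕ) : ℂ) * (rc^n)⁻¹)))
        = ((q ^ (a * (n : ℝ)) : ℝ) : ℂ) *
            ((-1 : ℂ) ^ (w - j) * iteratedDeriv j g rc /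
                ((j.factorial : ℂ) * ((w - j - 1).factorial : ℂ)) *
              (∏ k ∈ Finset.Icc 1 (w - j - 1), ((n : ℂ) + (k : ℂ))) *
              ((q ^ (a * ((w - j : ℕ) : ℝ)) : ℝ) : ℂ)) := by
      intro j hj
      have hfac2 : (((w-j-1).factorial : ℕ) : ℂ) ≠ 0 := by
        exact_mod_cast (w-j-1).factorial_ne_zero
      have hfac1 : ((j.factorial : ℕ) : ℂ) ≠ 0 := by
        exact_mod_cast j.factorial_ne_zero
      have hch : ((((n + (w-j-1)).choose (w-j-1) : ℕ)) : ℂ)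
          = (∏ k ∈ Finset.Icc 1 (w-j-1), ((n:ℂ) + (k:ℂ))) / (((w-j-1).factorial : ℕ) : ℂ) := by
        rw [eq_div_iff hfac2]
        exact auxChoose n (w-j-1)
      rw [hrcinv (w-j), hrcinv n, hch]
      simp only [hcdef]
      field_simp
    have h2 : c (w-1) * ((-1:ℂ)^(w-(w-1)) * ((rc^(w-(w-1)))⁻¹ *
          ((((n + (w-(w-1)-1)).choose (w-(w-1)-1) : ℕ) : ℂ) * (rc^n)⁻¹)))
        = -(((q ^ (a * (n : ℝ)) : ℝ) : ℂ) *
            (iteratedDeriv (w - 1) g rc / (((w - 1).factorial : ℕ) : ℂ) *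
              ((q ^ a : ℝ) : ℂ))) := by
      rw [show w - (w-1) = 1 from by omega]
      simp only [Nat.sub_self, Nat.choose_zero_right, pow_one, Nat.cast_one]
      have hrc1 : rc⁻¹ = ((q ^ a : ℝ) : ℂ) := by
        have h3 := hrcinv 1
        rw [pow_one] at h3
        rw [h3]
        norm_num
      rw [hrc1, hrcinv n]
      simp only [hcdef]
      push_cast
      ring
    rw [Finset.sum_congr rfl h1, h2, mul_sub, Finset.mul_sum]
    ring
  -- final bound
  rw [Asymptotics.isBigO_iff]
  refine ⟨C, Filter.Eventually.of_forall fun n => ?_⟩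
  rw [hNsc n, hcoeff n]
  have h6 := hC n
  rw [FormalMultilinearSeries.norm_apply_eq_norm_coef] at h6
  have hpow0 : (0:ℝ) < q ^ ((a - δ + ε) * (n:ℝ)) := Real.rpow_pos_of_pos hq0 _
  have h7 : ρ1^n = (q ^ ((a - δ + ε) * (n:ℝ)))⁻¹ := by
    rw [hρ1def, ← Real.rpow_natCast (q ^ (-(a - δ + ε))) n, ← Real.rpow_mul hq0.le]
    rw [show (-(a - δ + ε)) * (n:ℝ) = -((a - δ + ε) * (n:ℝ)) by ring]
    exact Real.rpow_neg hq0.le _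
  have h8 : ‖(q : ℝ) ^ ((a - δ + ε) * (n:ℝ))‖ = q ^ ((a - δ + ε) * (n:ℝ)) := by
    rw [Real.norm_eq_abs, abs_of_pos hpow0]
  rw [h8]
  have h9 : ((t1N : ℝ≥0) : ℝ) = ρ1 := rfl
  rw [h9, h7] at h6
  calc ‖p₀.coeff n‖ = ‖p₀.coeff n‖ * (q ^ ((a - δ + ε) * (n:ℝ)))⁻¹ * (q ^ ((a - δ + ε) * (n:ℝ))) := by
        field_simp
    _ ≤ C * q ^ ((a - δ + ε) * (n:ℝ)) := mul_le_mul_of_nonneg_right h6 hpow0.le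
end

section
/- Let q ≥ 2 and a > 0 be real numbers and w > 0 a real number. Suppose g and h are analytic on a disc {u ∈ ℂ : |u| < ρ} for some ρ > q^{−a}, that f(u) = Σ_{n≥0} a_n u^n (a_n ∈ ℂ) converges for |u| < q^{−a}, and that f(u) = g(u)·(q^{−a} − u)^{−w} + h(u) for all |u| < q^{−a}, where z^{−w} denotes the principal complex power (this is well defined and analytic in u on the disc since Re(q^{−a} − u) > 0 there). Then a_n · q^{−an} · n^{1−w} → g(q^{−a})·q^{aw}/Γ(w) as n → ∞. -/
open Filter Asymptotics Topology

open Finset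

/-- Taylor coefficient at 0. -/
noncomputable def tcoef (F : ℂ → ℂ) (n : ℕ) : ℂ := iteratedDeriv n F 0 / (n.factorial : ℂ)

lemma coeff_eq_tcoef {F : ℂ → ℂ} {p : FormalMultilinearSeries ℂ ℂ ℂ} {s : ENNReal}
    (hp : HasFPowerSeriesOnBall F p 0 s) (n : ℕ) : p.coeff n = tcoef F n := by
  have h := hp.factorial_smul (1 : ℂ) n
  have h2 : (p n fun _ => (1:ℂ)) = p.coeff n := by
    rw [FormalMultilinearSeries.apply_eq_pow_smul_coeff, one_pow, one_smul]
  rw [h2, nsmul_eq_mul] at h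
  rw [tcoef, iteratedDeriv_eq_iteratedFDeriv, ← h]
  rw [mul_comm, mul_div_assoc, div_self (by exact_mod_cast Nat.factorial_ne_zero n : ((n.factorial : ℕ) : ℂ) ≠ 0), mul_one]

lemma hasSum_tcoef {F : ℂ → ℂ} {s : ℝ}
    (hF : ∀ u : ℂ, ‖u‖ < s → DifferentiableAt ℂ F u) {u : ℂ} (hu : ‖u‖ < s) :
    HasSum (fun n : ℕ => tcoef F n * u ^ n) (F u) := by
  have h0 : (0:ℝ) ≤ ‖u‖ := norm_nonneg u
  set s' : NNReal := ⟨(‖u‖ + s) / 2, by linarith⟩ with hs'def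
  have hs'v : (s' : ℝ) = (‖u‖ + s) / 2 := rfl
  have hs1 : (s' : ℝ) < s := by rw [hs'v]; linarith
  have hs0 : 0 < s' := by
    rw [← NNReal.coe_lt_coe, hs'v, NNReal.coe_zero]; linarith
  have hd : DifferentiableOn ℂ F (Metric.closedBall 0 s') := by
    intro x hx
    refine (hF x ?_).differentiableWithinAt
    have := Metric.mem_closedBall.mp hx
    rw [dist_zero_right] at this
    linarith
  have hp := hd.hasFPowerSeriesOnBall hs0
  have hmem : u ∈ Metric.eball (0:ℂ) s' := by
    rw [Metric.mem_eball, edist_zero_right, enorm_eq_nnnorm, ← ENNReal.coe_lt_coe.symm]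
    · exact_mod_cast show (‖u‖₊ : ℝ) < s' by rw [coe_nnnorm, hs'v]; linarith
  have hsum := hp.hasSum hmem
  rw [zero_add] at hsum
  refine hsum.congr_fun fun n => ?_
  rw [FormalMultilinearSeries.apply_eq_pow_smul_coeff, coeff_eq_tcoef hp, smul_eq_mul, mul_comm]

lemma tcoef_deriv (F : ℂ → ℂ) (n : ℕ) :
    tcoef (deriv F) n = (n + 1) * tcoef F (n + 1) := by
  rw [tcoef, tcoef, ← iteratedDeriv_succ']
  have hfc : (((n+1).factorial : ℕ) : ℂ) = ((n:ℂ)+1) * (n.factorial : ℂ) := by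
    rw [Nat.factorial_succ]; push_cast; ring
  rw [hfc]
  have h1 : ((n.factorial : ℕ) : ℂ) ≠ 0 := by
    exact_mod_cast Nat.factorial_ne_zero n
  have h2 : ((n:ℂ)+1) ≠ 0 := by
    have := n.cast_add_one_ne_zero (R := ℂ); exact_mod_cast this
  field_simp

lemma tcoef_bound {F : ℂ → ℂ} {s M : ℝ} (hs : 0 < s)
    (hF : ∀ u : ℂ, ‖u‖ < s → DifferentiableAt ℂ F u)
    (hM : ∀ u : ℂ, ‖u‖ < s → ‖F u‖ ≤ M) (n : ℕ) :
    ‖tcoef F n‖ * s ^ n ≤ M := by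
  have hM0 : 0 ≤ M := le_trans (norm_nonneg (F 0)) (hM 0 (by simpa using hs))
  have key : ∀ t : ℝ, 0 < t → t < s → ‖tcoef F n‖ * t ^ n ≤ M := by
    intro t ht hts
    set t' : NNReal := ⟨t, ht.le⟩ with ht'def
    have ht'v : (t' : ℝ) = t := rfl
    have ht'0 : 0 < t' := by rw [← NNReal.coe_lt_coe, ht'v, NNReal.coe_zero]; linarith
    have hd : DifferentiableOn ℂ F (Metric.closedBall 0 t') := by
      intro x hx
      refine (hF x ?_).differentiableWithinAt
      have := Metric.mem_closedBall.mp hx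
      rw [dist_zero_right] at this
      rw [ht'v] at this; linarith
    have hp := hd.hasFPowerSeriesOnBall ht'0
    have hco : tcoef F n = (cauchyPowerSeries F 0 t').coeff n := (coeff_eq_tcoef hp n).symm
    set p := cauchyPowerSeries F 0 t' with hpdef
    have h1 : ‖p.coeff n‖ ≤ ‖p n‖ := by
      have h := (p n).le_opNorm (fun _ => (1:ℂ))
      rw [FormalMultilinearSeries.coeff]
      refine h.trans ?_
      simp
    have h2 := norm_cauchyPowerSeries_le F 0 t' n
    -- bound the integral
    have hcont : Continuous (fun θ : ℝ => ‖F (circleMap 0 t' θ)‖) := by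
      rw [continuous_iff_continuousAt]
      intro θ
      have hmem : ‖circleMap 0 (t' : ℝ) θ‖ < s := by
        rw [norm_circleMap_zero, ht'v, abs_of_pos ht]; exact hts
      exact ((hF _ hmem).continuousAt.comp (continuous_circleMap 0 (t':ℝ)).continuousAt).norm
    have hint : (∫ θ : ℝ in (0)..2 * Real.pi, ‖F (circleMap 0 t' θ)‖) ≤ 2 * Real.pi * M := by
      have := intervalIntegral.integral_mono_on (a := 0) (b := 2 * Real.pi)
        (by positivity : (0:ℝ) ≤ 2 * Real.pi)
        (hcont.intervalIntegrable _ _) ((intervalIntegrable_const : IntervalIntegrable (fun _ => M) MeasureTheory.volume 0 (2*Real.pi)))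
        (fun θ _ => by
          refine hM _ ?_
          rw [norm_circleMap_zero, ht'v, abs_of_pos ht]; exact hts)
      simpa using this
    have h3 : ‖p n‖ ≤ M * (t⁻¹) ^ n := by
      refine h2.trans ?_
      have hpi : (0:ℝ) < (2 * Real.pi)⁻¹ := by positivity
      have : (2 * Real.pi)⁻¹ * (∫ θ : ℝ in (0)..2 * Real.pi, ‖F (circleMap 0 t' θ)‖) ≤ M := by
        calc (2 * Real.pi)⁻¹ * (∫ θ : ℝ in (0)..2 * Real.pi, ‖F (circleMap 0 t' θ)‖)
            ≤ (2 * Real.pi)⁻¹ * (2 * Real.pi * M) := by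
              exact mul_le_mul_of_nonneg_left hint hpi.le
          _ = M := by field_simp
      have habs : |(t' : ℝ)|⁻¹ ^ n = (t⁻¹) ^ n := by rw [ht'v, abs_of_pos ht]
      rw [habs]
      exact mul_le_mul_of_nonneg_right this (by positivity)
    have h4 : ‖tcoef F n‖ ≤ M * (t⁻¹) ^ n := by
      rw [hco]; exact h1.trans h3
    calc ‖tcoef F n‖ * t ^ n ≤ (M * (t⁻¹) ^ n) * t ^ n :=
          mul_le_mul_of_nonneg_right h4 (by positivity)
      _ = M := by rw [inv_pow, mul_assoc, inv_mul_cancel₀ (by positivity), mul_one]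
  -- pass to the limit t → s⁻
  have hcont : Tendsto (fun t : ℝ => ‖tcoef F n‖ * t ^ n) (nhdsWithin s (Set.Iio s))
      (nhds (‖tcoef F n‖ * s ^ n)) := by
    exact ((continuous_const.mul (continuous_pow n)).tendsto s).mono_left nhdsWithin_le_nhds
  refine le_of_tendsto hcont ?_
  have hIoo : Set.Ioo (0:ℝ) s ∈ nhdsWithin s (Set.Iio s) :=
    Ioo_mem_nhdsLT_of_mem (by simp [hs] : s ∈ Set.Ioc (0:ℝ) s)
  filter_upwards [hIoo] with t ht
  exact key t ht.1 ht.2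

lemma hasSum_coeff_unique {F : ℂ → ℂ} {c d : ℕ → ℂ} {ε : ℝ} (hε : 0 < ε)
    (hc : ∀ u : ℂ, ‖u‖ < ε → HasSum (fun n : ℕ => c n * u ^ n) (F u))
    (hd : ∀ u : ℂ, ‖u‖ < ε → HasSum (fun n : ℕ => d n * u ^ n) (F u)) : c = d := by
  have build : ∀ (e : ℕ → ℂ), (∀ u : ℂ, ‖u‖ < ε → HasSum (fun n : ℕ => e n * u ^ n) (F u)) →
      HasFPowerSeriesAt F (FormalMultilinearSeries.ofScalars ℂ e) 0 := by
    intro e he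
    refine ⟨ENNReal.ofReal (ε/2), ?_, ?_, ?_⟩
    · -- radius bound
      have hu : ‖((3*ε/4 : ℝ) : ℂ)‖ < ε := by
        rw [Complex.norm_real, Real.norm_eq_abs, abs_of_pos (by linarith)]; linarith
      have hsum := (he _ hu).summable
      have htend := hsum.tendsto_atTop_zero
      have hbdd : BddAbove (Set.range fun n : ℕ => ‖e n * ((3*ε/4 : ℝ) : ℂ) ^ n‖) :=
        htend.norm.bddAbove_range
      obtain ⟨C, hC⟩ := hbdd
      have hC' : ∀ n : ℕ, ‖e n‖ * (3*ε/4) ^ n ≤ C := by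
        intro n
        have := hC (Set.mem_range_self n)
        rw [norm_mul, norm_pow, Complex.norm_real, Real.norm_eq_abs,
          abs_of_pos (by linarith)] at this
        exact this
      rw [ENNReal.ofReal]
      refine FormalMultilinearSeries.le_radius_of_bound _ C fun n => ?_
      have hnorm : ‖FormalMultilinearSeries.ofScalars ℂ e n‖ = ‖e n‖ :=
        FormalMultilinearSeries.ofScalars_norm _ _ _
      rw [hnorm]
      have hle : ((ε/2 : ℝ).toNNReal : ℝ) ^ n ≤ (3*ε/4) ^ n := by
        refine pow_le_pow_left₀ (by positivity) ?_ n
        rw [Real.coe_toNNReal _ (by linarith)]; linarith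
      calc ‖e n‖ * ((ε/2 : ℝ).toNNReal : ℝ) ^ n ≤ ‖e n‖ * (3*ε/4) ^ n :=
            mul_le_mul_of_nonneg_left hle (norm_nonneg _)
        _ ≤ C := hC' n
    · exact ENNReal.ofReal_pos.mpr (by linarith)
    · intro y hy
      rw [EMetric.mem_ball, edist_zero_right, enorm_eq_nnnorm, ← ENNReal.ofReal_coe_nnreal] at hy
      have hy' : ‖y‖ < ε := by
        have := (ENNReal.ofReal_lt_ofReal_iff (by linarith)).mp hy
        rw [coe_nnnorm] at this; linarith
      rw [zero_add]
      refine (he y hy').congr_fun fun n => ?_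
      rw [FormalMultilinearSeries.ofScalars_apply_eq, smul_eq_mul]
  have := (build c hc).eq_formalMultilinearSeries (build d hd)
  exact FormalMultilinearSeries.ofScalars_series_injective ℂ ℂ this

lemma re_pos_of_norm_lt {r : ℝ} {u : ℂ} (hu : ‖u‖ < r) : 0 < ((r:ℂ) - u).re := by
  have h1 : u.re ≤ ‖u‖ := by exact Complex.re_le_norm u
  simp only [Complex.sub_re, Complex.ofReal_re]
  linarith

lemma hasDerivAt_cpow_sub {r : ℝ} {u : ℂ} (hu : ‖u‖ < r) (z : ℂ) :
    HasDerivAt (fun v : ℂ => ((r:ℂ) - v) ^ z) (-(z * ((r:ℂ) - u) ^ (z - 1))) u := by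
  have hbase : HasDerivAt (fun v : ℂ => (r:ℂ) - v) (-1) u := (hasDerivAt_id u).const_sub (r:ℂ)
  have hslit : ((r:ℂ) - u) ∈ Complex.slitPlane :=
    Complex.mem_slitPlane_iff.mpr (Or.inl (re_pos_of_norm_lt hu))
  have := hbase.cpow_const (c := z) hslit
  simpa [mul_neg_one] using this

lemma itd_cpow {r : ℝ} (hr : 0 < r) (z : ℂ) (n : ℕ) :
    ∀ u : ℂ, ‖u‖ < r → iteratedDeriv n (fun v : ℂ => ((r:ℂ) - v) ^ z) u =
      (∏ j ∈ Finset.range n, ((j:ℂ) - z)) * ((r:ℂ) - u) ^ (z - n) := by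
  induction n with
  | zero => intro u hu; simp [iteratedDeriv_zero]
  | succ n ih =>
    intro u hu
    rw [iteratedDeriv_succ]
    have hball : u ∈ Metric.ball (0:ℂ) r := by rwa [Metric.mem_ball, dist_zero_right]
    have hev : iteratedDeriv n (fun v : ℂ => ((r:ℂ) - v) ^ z) =ᶠ[nhds u]
        fun v => (∏ j ∈ Finset.range n, ((j:ℂ) - z)) * ((r:ℂ) - v) ^ (z - n) := by
      filter_upwards [Metric.isOpen_ball.mem_nhds hball] with v hv
      exact ih v (by rwa [Metric.mem_ball, dist_zero_right] at hv)
    rw [hev.deriv_eq]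
    have hd := (hasDerivAt_cpow_sub hu (z - n)).const_mul (∏ j ∈ Finset.range n, ((j:ℂ) - z))
    rw [hd.deriv]
    have hexp : z - (n:ℂ) - 1 = z - ((n:ℕ)+1:ℕ) := by push_cast; ring
    rw [Finset.prod_range_succ, ← hexp]
    ring

lemma tcoef_cpow {r : ℝ} (hr : 0 < r) (z : ℂ) (n : ℕ) :
    tcoef (fun v : ℂ => ((r:ℂ) - v) ^ z) n =
      (∏ j ∈ Finset.range n, ((j:ℂ) - z)) * ((r:ℂ)) ^ (z - n) / (n.factorial : ℂ) := by
  rw [tcoef, itd_cpow hr z n 0 (by simpa using hr), sub_zero]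

lemma gamm (s : ℝ) :
    Tendsto (fun n : ℕ => (∏ j ∈ Finset.range n, (s + j)) / (n.factorial : ℝ) * (n:ℝ) ^ (1 - s))
      atTop (𝓝 (Real.Gamma s)⁻¹) := by
  by_cases hs : ∃ m : ℕ, s = -m
  · obtain ⟨m, rfl⟩ := hs
    rw [Real.Gamma_neg_nat_eq_zero, inv_zero]
    refine Tendsto.congr' ?_ tendsto_const_nhds
    filter_upwards [eventually_ge_atTop (m+1)] with n hn
    have hz : (∏ j ∈ Finset.range n, (-(m:ℝ) + j)) = 0 :=
      Finset.prod_eq_zero (i := m) (Finset.mem_range.mpr (by omega)) (by push_cast; ring)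
    rw [hz, zero_div, zero_mul]
  · push_neg at hs
    have h1 : Tendsto (fun n : ℕ => ((s + n)/n : ℝ)) atTop (𝓝 1) := by
      have hinv : Tendsto (fun n : ℕ => ((n:ℝ))⁻¹) atTop (𝓝 0) :=
        tendsto_inv_atTop_zero.comp tendsto_natCast_atTop_atTop
      have := (hinv.const_mul s).add tendsto_const_nhds (b := (1:ℝ))
      rw [mul_zero, zero_add] at this
      refine Tendsto.congr' ?_ this
      filter_upwards [eventually_ge_atTop 1] with n hn
      have hn0 : (n:ℝ) ≠ 0 := by positivity
      field_simp
    have h2 : Tendsto (fun n : ℕ => ((n:ℝ)/(s+n))) atTop (𝓝 1) := by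
      have := h1.inv₀ one_ne_zero
      simpa [inv_div] using this
    have h3 : Tendsto (fun n : ℕ => (Real.GammaSeq s n)⁻¹) atTop (𝓝 (Real.Gamma s)⁻¹) :=
      (Real.GammaSeq_tendsto_Gamma s).inv₀ (Real.Gamma_ne_zero hs)
    have main := h2.mul h3
    rw [one_mul] at main
    refine Tendsto.congr' ?_ main
    filter_upwards [eventually_ge_atTop 1] with n hn
    have hn0 : (0:ℝ) < n := by exact_mod_cast hn
    have hsn : s + n ≠ 0 := fun hcon => hs n (by linarith)
    have hns : (0:ℝ) < (n:ℝ) ^ s := Real.rpow_pos_of_pos hn0 s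
    have hfac : ((n.factorial : ℕ) : ℝ) ≠ 0 := by exact_mod_cast Nat.factorial_ne_zero n
    have hP : (∏ j ∈ Finset.range n, (s + j)) ≠ 0 :=
      Finset.prod_ne_zero_iff.mpr fun j _ => fun hcon => hs j (by linarith)
    rw [Real.GammaSeq, Finset.prod_range_succ, Real.rpow_sub hn0, Real.rpow_one]
    field_simp

lemma gammk {w : ℝ} (k : ℕ) :
    Tendsto (fun n : ℕ => (∏ j ∈ Finset.range n, (w - k + j)) / (n.factorial : ℝ) *
      (n:ℝ) ^ (1 - w)) atTop (𝓝 (if k = 0 then (Real.Gamma w)⁻¹ else 0)) := by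
  have hk : Tendsto (fun n : ℕ => (n:ℝ) ^ (-(k:ℝ))) atTop (𝓝 (if k = 0 then 1 else 0)) := by
    rcases Nat.eq_zero_or_pos k with hk0 | hk0
    · subst hk0; simpa using tendsto_const_nhds (α := ℕ) (f := atTop) (a := (1:ℝ))
    · rw [if_neg (by omega)]
      exact (tendsto_rpow_neg_atTop (by exact_mod_cast hk0)).comp
        tendsto_natCast_atTop_atTop
  have main := (gamm (w - k)).mul hk
  have hval : (Real.Gamma (w - k))⁻¹ * (if k = 0 then (1:ℝ) else 0) =
      (if k = 0 then (Real.Gamma w)⁻¹ else 0) := by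
    rcases Nat.eq_zero_or_pos k with hk0 | hk0
    · subst hk0; simp
    · rw [if_neg (by omega), if_neg (by omega), mul_zero]
  rw [hval] at main
  refine Tendsto.congr' ?_ main
  filter_upwards [eventually_ge_atTop 1] with n hn
  have hn0 : (0:ℝ) < n := by exact_mod_cast hn
  rw [mul_assoc, ← Real.rpow_add hn0]
  congr 2
  ring

theorem stmt6 (q a w ρ : ℝ) (hq : 2 ≤ q) (ha : 0 < a) (hw : 0 < w)
    (hρ : q ^ (-a) < ρ)
    (A : ℕ → ℂ) (f g h : ℂ → ℂ)
    (hf : ∀ u : ℂ, ‖u‖ < q ^ (-a) → HasSum (fun n : ℕ => A n * u ^ n) (f u))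
    (hg : ∀ u : ℂ, ‖u‖ < ρ → DifferentiableAt ℂ g u)
    (hh : ∀ u : ℂ, ‖u‖ < ρ → DifferentiableAt ℂ h u)
    (heq : ∀ u : ℂ, ‖u‖ < q ^ (-a) →
      f u = g u * (((q ^ (-a) : ℝ) : ℂ) - u) ^ (-(w : ℂ)) + h u) :
    Tendsto (fun n : ℕ => A n * ((q ^ (-(a * (n : ℝ))) * (n : ℝ) ^ (1 - w) : ℝ) : ℂ))
      atTop (𝓝 (g ((q ^ (-a) : ℝ) : ℂ) * ((q ^ (a * w) / Real.Gamma w : ℝ) : ℂ))) := by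
  have hq0 : (0:ℝ) < q := by linarith
  set r : ℝ := q ^ (-a) with hrdef
  have hr0 : 0 < r := Real.rpow_pos_of_pos hq0 _
  have hrρ : r < ρ := hρ
  set R : ℂ := ((r : ℝ) : ℂ) with hRdef
  have hRnorm : ‖R‖ = r := by rw [hRdef, Complex.norm_real, Real.norm_eq_abs, abs_of_pos hr0]
  have hRball : R ∈ Metric.ball (0:ℂ) ρ := by
    rw [Metric.mem_ball, dist_zero_right, hRnorm]; exact hrρ
  set K : ℕ := ⌈w⌉₊ + 2 with hKdef
  have hKw : w + 1 < K := by
    have := Nat.le_ceil w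
    have h2 : ((K:ℝ)) = (⌈w⌉₊ : ℝ) + 2 := by rw [hKdef]; push_cast; ring
    rw [h2]; linarith
  set zK : ℂ := (K:ℂ) - w with hzKdef
  set tK : ℝ := (K:ℝ) - w with htKdef
  have htK1 : 1 < tK := by rw [htKdef]; linarith
  have hzKcast : zK = ((tK : ℝ) : ℂ) := by rw [hzKdef, htKdef]; push_cast; ring
  -- iterated dslope of g
  set gs : ℕ → ℂ → ℂ := fun j => (fun F => dslope F R)^[j] g with hgsdef
  have hgs0 : gs 0 = g := rfl
  have hgs_succ : ∀ j, gs (j+1) = dslope (gs j) R := fun j => Function.iterate_succ_apply' _ j g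
  have hgdiff : ∀ j, DifferentiableOn ℂ (gs j) (Metric.ball (0:ℂ) ρ) := by
    intro j; induction j with
    | zero =>
      intro x hx
      exact (hg x (by rwa [Metric.mem_ball, dist_zero_right] at hx)).differentiableWithinAt
    | succ j ih =>
      rw [hgs_succ]
      exact (Complex.differentiableOn_dslope (Metric.isOpen_ball.mem_nhds hRball)).mpr ih
  have hgdecomp : ∀ (m : ℕ) (u : ℂ), g u =
      (∑ k ∈ Finset.range m, gs k R * (u - R)^k) + (u - R)^m * gs m u := by
    intro m
    induction m with
    | zero => intro u; simp [← hgs0]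
    | succ m ih =>
      intro u
      rw [Finset.sum_range_succ, ih u]
      have key : (u - R) * gs (m+1) u = gs m u - gs m R := by
        have hks := sub_smul_dslope (gs m) R u
        rw [smul_eq_mul] at hks
        rw [hgs_succ]; exact hks
      have expand : (u-R)^(m+1) * gs (m+1) u = (u-R)^m * (gs m u - gs m R) := by
        rw [pow_succ, mul_assoc, key]
      rw [expand]; ring
  -- differentiability facts on the small ball
  have hball_sub : ∀ u : ℂ, ‖u‖ < r → ‖u‖ < ρ := fun u hu => lt_trans hu hrρ
  have hgsdiffAt : ∀ (j : ℕ) (u : ℂ), ‖u‖ < ρ → DifferentiableAt ℂ (gs j) u := by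
    intro j u hu
    exact ((hgdiff j) u (by rwa [Metric.mem_ball, dist_zero_right])).differentiableAt
      (Metric.isOpen_ball.mem_nhds (by rwa [Metric.mem_ball, dist_zero_right]))
  have hcpow_diff : ∀ (z : ℂ) (u : ℂ), ‖u‖ < r →
      DifferentiableAt ℂ (fun v : ℂ => (R - v) ^ z) u := by
    intro z u hu
    rw [hRdef]
    exact (hasDerivAt_cpow_sub hu z).differentiableAt
  -- the remainder function
  set E : ℂ → ℂ := fun u => h u + (-1:ℂ)^K * (gs K u * (R - u) ^ zK) with hEdef
  have hdiffE : ∀ u : ℂ, ‖u‖ < r → DifferentiableAt ℂ E u := by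
    intro u hu
    exact (hh u (hball_sub u hu)).add
      (((hgsdiffAt K u (hball_sub u hu)).mul (hcpow_diff zK u hu)).const_mul _)
  -- the coefficient sequence
  set c : ℕ → ℂ := fun n => (∑ k ∈ Finset.range K, (-1:ℂ)^k * gs k R *
      ((∏ j ∈ Finset.range n, ((j:ℂ) - ((k:ℂ) - w))) * R ^ (((k:ℂ) - w) - (n:ℂ)) /
        (n.factorial : ℂ))) + tcoef E n with hcdef
  -- Step A : HasSum of c to f on the ball
  have hsumc : ∀ u : ℂ, ‖u‖ < r → HasSum (fun n : ℕ => c n * u ^ n) (f u) := by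
    intro u hu
    have hterm : ∀ k ∈ Finset.range K, HasSum
        (fun n : ℕ => ((-1:ℂ)^k * gs k R *
          ((∏ j ∈ Finset.range n, ((j:ℂ) - ((k:ℂ) - w))) * R ^ (((k:ℂ) - w) - (n:ℂ)) /
            (n.factorial : ℂ))) * u ^ n)
        ((-1:ℂ)^k * gs k R * (R - u) ^ ((k:ℂ) - w)) := by
      intro k _
      have hs := hasSum_tcoef (F := fun v : ℂ => (R - v) ^ ((k:ℂ) - w)) (s := r)
        (hcpow_diff ((k:ℂ) - w)) hu
      have hs2 := hs.mul_left ((-1:ℂ)^k * gs k R)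
      refine hs2.congr_fun fun n => ?_
      rw [hRdef, tcoef_cpow hr0]
      ring
    have hEsum := hasSum_tcoef (F := E) hdiffE hu
    have hsum1 := (hasSum_sum hterm).add hEsum
    have hfn : ∀ n : ℕ, (∑ k ∈ Finset.range K, ((-1:ℂ)^k * gs k R *
          ((∏ j ∈ Finset.range n, ((j:ℂ) - ((k:ℂ) - w))) * R ^ (((k:ℂ) - w) - (n:ℂ)) /
            (n.factorial : ℂ))) * u ^ n) + tcoef E n * u ^ n = c n * u ^ n := by
      intro n
      rw [hcdef, add_mul, Finset.sum_mul]
    have hsum2 := hsum1.congr_fun fun n => (hfn n).symm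
    have hRu : R - u ≠ 0 := by
      have hre := re_pos_of_norm_lt (r := r) hu
      rw [← hRdef] at hre
      intro hcon
      rw [hcon] at hre
      simp at hre
    have hval : (∑ k ∈ Finset.range K, (-1:ℂ)^k * gs k R * (R - u) ^ ((k:ℂ) - w)) + E u
        = f u := by
      rw [heq u hu, hgdecomp K u, hEdef]
      have hterm2 : ∀ k : ℕ, gs k R * (u - R)^k * (R - u) ^ (-(w:ℂ)) =
          (-1:ℂ)^k * gs k R * (R - u) ^ ((k:ℂ) - w) := by
        intro k
        have h1 : (u - R)^k = (-1:ℂ)^k * (R - u)^k := by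
          rw [← neg_sub R u, neg_pow]
        have h2 : (R - u) ^ ((k:ℂ) - w) = (R - u)^(k:ℕ) * (R - u) ^ (-(w:ℂ)) := by
          rw [← Complex.cpow_natCast, ← Complex.cpow_add _ _ hRu]
          exact congrArg (fun t => (R - u) ^ t) (sub_eq_add_neg _ _)
        rw [h1, h2]; ring
      have hterm3 : (u - R)^K * gs K u * (R - u) ^ (-(w:ℂ)) =
          (-1:ℂ)^K * (gs K u * (R - u) ^ zK) := by
        have h1 : (u - R)^K = (-1:ℂ)^K * (R - u)^K := by
          rw [← neg_sub R u, neg_pow]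
        have h2 : (R - u) ^ zK = (R - u)^(K:ℕ) * (R - u) ^ (-(w:ℂ)) := by
          rw [← Complex.cpow_natCast, ← Complex.cpow_add _ _ hRu, hzKdef]
          exact congrArg (fun t => (R - u) ^ t) (sub_eq_add_neg _ _)
        rw [h1, h2]; ring
      rw [add_mul, Finset.sum_mul]
      rw [Finset.sum_congr rfl (fun k _ => hterm2 k), hterm3]
      ring
    rwa [hval] at hsum2
  -- Step B : identify the coefficients
  have hAc : A = c := hasSum_coeff_unique hr0 hf hsumc
  -- Step C : the limit
  -- the derivative bound for E
  set E' : ℂ → ℂ := fun u => deriv h u + (-1:ℂ)^K *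
      (deriv (gs K) u * (R - u) ^ zK + gs K u * (-(zK * (R - u) ^ (zK - 1)))) with hE'def
  have hE'eq : ∀ u : ℂ, ‖u‖ < r → HasDerivAt E (E' u) u := by
    intro u hu
    have h1 : HasDerivAt h (deriv h u) u := (hh u (hball_sub u hu)).hasDerivAt
    have h2 : HasDerivAt (gs K) (deriv (gs K) u) u :=
      (hgsdiffAt K u (hball_sub u hu)).hasDerivAt
    have h3 : HasDerivAt (fun v : ℂ => (R - v) ^ zK) (-(zK * (R - u) ^ (zK - 1))) u := by
      rw [hRdef]; exact hasDerivAt_cpow_sub hu zK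
    have h4 := (h2.mul h3).const_mul ((-1:ℂ)^K)
    exact h1.add h4
  -- bounds on the closed ball
  have hsubρ : Metric.closedBall (0:ℂ) r ⊆ Metric.ball (0:ℂ) ρ := by
    intro x hx
    rw [Metric.mem_closedBall] at hx
    rw [Metric.mem_ball]
    linarith
  have hgsK_cont : ContinuousOn (gs K) (Metric.closedBall (0:ℂ) r) :=
    ((hgdiff K).continuousOn).mono hsubρ
  have hgsK'_cont : ContinuousOn (deriv (gs K)) (Metric.closedBall (0:ℂ) r) :=
    ((((hgdiff K).analyticOnNhd Metric.isOpen_ball).deriv).continuousOn).mono hsubρ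
  have hh'_cont : ContinuousOn (deriv h) (Metric.closedBall (0:ℂ) r) := by
    have hhd : DifferentiableOn ℂ h (Metric.ball (0:ℂ) ρ) := fun x hx =>
      (hh x (by rwa [Metric.mem_ball, dist_zero_right] at hx)).differentiableWithinAt
    exact (((hhd.analyticOnNhd Metric.isOpen_ball).deriv).continuousOn).mono hsubρ
  obtain ⟨C₁, hC₁⟩ := (isCompact_closedBall (0:ℂ) r).exists_bound_of_continuousOn hgsK_cont
  obtain ⟨C₂, hC₂⟩ := (isCompact_closedBall (0:ℂ) r).exists_bound_of_continuousOn hgsK'_cont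
  obtain ⟨C₃, hC₃⟩ := (isCompact_closedBall (0:ℂ) r).exists_bound_of_continuousOn hh'_cont
  have hC₁0 : 0 ≤ C₁ := le_trans (norm_nonneg _) (hC₁ 0 (Metric.mem_closedBall_self hr0.le))
  have hC₂0 : 0 ≤ C₂ := le_trans (norm_nonneg _) (hC₂ 0 (Metric.mem_closedBall_self hr0.le))
  have hC₃0 : 0 ≤ C₃ := le_trans (norm_nonneg _) (hC₃ 0 (Metric.mem_closedBall_self hr0.le))
  set M : ℝ := C₃ + (C₂ * (2*r) ^ tK + C₁ * (‖zK‖ * (2*r) ^ (tK - 1))) with hMdef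
  have hcpow_bound : ∀ (t : ℝ), 0 ≤ t → ∀ u : ℂ, ‖u‖ < r →
      ‖(R - u) ^ ((t:ℝ):ℂ)‖ ≤ (2*r) ^ t := by
    intro t ht u hu
    rw [Complex.norm_cpow_real]
    have habs : ‖R - u‖ ≤ 2*r := by
      calc ‖R - u‖ ≤ ‖R‖ + ‖u‖ := by
            exact (norm_sub_le R u)
        _ ≤ 2*r := by
            rw [hRnorm]
            have : ‖u‖ ≤ r := hu.le
            linarith
    exact Real.rpow_le_rpow (norm_nonneg _) habs ht
  have hE'bound : ∀ u : ℂ, ‖u‖ < r → ‖E' u‖ ≤ M := by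
    intro u hu
    have humem : u ∈ Metric.closedBall (0:ℂ) r := by
      rw [Metric.mem_closedBall, dist_zero_right]; exact hu.le
    have b1 : ‖deriv h u‖ ≤ C₃ := hC₃ u humem
    have b2 : ‖deriv (gs K) u * (R - u) ^ zK‖ ≤ C₂ * (2*r) ^ tK := by
      rw [norm_mul]
      refine mul_le_mul (hC₂ u humem) ?_ (norm_nonneg _) hC₂0
      rw [hzKcast]
      exact hcpow_bound tK (by linarith) u hu
    have b3 : ‖gs K u * (-(zK * (R - u) ^ (zK - 1)))‖ ≤ C₁ * (‖zK‖ * (2*r) ^ (tK - 1)) := by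
      rw [norm_mul, norm_neg, norm_mul]
      refine mul_le_mul (hC₁ u humem) ?_ (by positivity) hC₁0
      refine mul_le_mul_of_nonneg_left ?_ (norm_nonneg zK)
      have hexp : zK - 1 = (((tK - 1 : ℝ)):ℂ) := by rw [hzKcast]; push_cast; ring
      rw [hexp]
      exact hcpow_bound (tK - 1) (by linarith) u hu
    calc ‖E' u‖ ≤ ‖deriv h u‖ + ‖(-1:ℂ)^K *
        (deriv (gs K) u * (R - u) ^ zK + gs K u * (-(zK * (R - u) ^ (zK - 1))))‖ :=
          norm_add_le _ _
      _ ≤ C₃ + (C₂ * (2*r) ^ tK + C₁ * (‖zK‖ * (2*r) ^ (tK - 1))) := by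
          rw [norm_mul, norm_pow, norm_neg, norm_one, one_pow, one_mul]
          exact add_le_add b1 ((norm_add_le _ _).trans (add_le_add b2 b3))
      _ = M := hMdef.symm
  have hEd_diff : ∀ u : ℂ, ‖u‖ < r → DifferentiableAt ℂ (deriv E) u := by
    intro u hu
    have hEon : DifferentiableOn ℂ E (Metric.ball (0:ℂ) r) := fun x hx =>
      (hdiffE x (by rwa [Metric.mem_ball, dist_zero_right] at hx)).differentiableWithinAt
    exact ((hEon.analyticOnNhd Metric.isOpen_ball).deriv u
      (by rwa [Metric.mem_ball, dist_zero_right])).differentiableAt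
  have hEd_bound : ∀ u : ℂ, ‖u‖ < r → ‖deriv E u‖ ≤ M := by
    intro u hu
    rw [(hE'eq u hu).deriv]
    exact hE'bound u hu
  have hDbound : ∀ m : ℕ, ‖tcoef (deriv E) m‖ * r ^ m ≤ M := fun m =>
    tcoef_bound hr0 hEd_diff hEd_bound m
  have hM0 : 0 ≤ M := le_trans (by positivity) (hDbound 0)
  -- pointwise decomposition of the sequence
  set T : ℕ → ℕ → ℂ := fun k n => (-1:ℂ)^k * gs k R *
      (((r ^ ((k:ℝ) - w) * ((∏ j ∈ Finset.range n, (w - (k:ℝ) + j)) / (n.factorial : ℝ) *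
        (n:ℝ) ^ (1 - w))) : ℝ) : ℂ) with hTdef
  set Rem : ℕ → ℂ := fun n => tcoef E n * ((r ^ ((n:ℕ):ℝ) * (n:ℝ) ^ (1 - w) : ℝ) : ℂ)
    with hRemdef
  have hq_pow : ∀ n : ℕ, q ^ (-(a * (n:ℝ))) = r ^ ((n:ℕ):ℝ) := by
    intro n
    rw [hrdef, ← Real.rpow_mul hq0.le]
    congr 1
    ring
  have hpointwise : ∀ n : ℕ, A n * ((q ^ (-(a * (n:ℝ))) * (n:ℝ) ^ (1 - w) : ℝ) : ℂ) =
      (∑ k ∈ Finset.range K, T k n) + Rem n := by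
    intro n
    rw [hAc, hq_pow n, hcdef, hTdef, hRemdef]
    rw [add_mul, Finset.sum_mul]
    congr 1
    refine Finset.sum_congr rfl fun k _ => ?_
    -- per-term cast manipulation
    have hPc : (∏ j ∈ Finset.range n, ((j:ℂ) - ((k:ℂ) - w))) =
        (((∏ j ∈ Finset.range n, (w - (k:ℝ) + j)) : ℝ) : ℂ) := by
      rw [Complex.ofReal_prod]
      refine Finset.prod_congr rfl fun j _ => ?_
      push_cast; ring
    have hexp : ((k:ℂ) - w) - (n:ℂ) = (((((k:ℝ) - w - (n:ℝ)) : ℝ)):ℂ) := by push_cast; ring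
    have hRpow : R ^ (((k:ℂ) - w) - (n:ℂ)) = ((r ^ ((k:ℝ) - w - (n:ℝ)) : ℝ) : ℂ) := by
      rw [hexp, hRdef, Complex.ofReal_cpow hr0.le]
    have key2 : r ^ ((k:ℝ) - w - (n:ℝ)) * r ^ ((n:ℕ):ℝ) = r ^ ((k:ℝ) - w) := by
      rw [← Real.rpow_add hr0]
      congr 1
      push_cast
      ring
    have key2c : ((r ^ ((k:ℝ) - w - (n:ℝ)) : ℝ) : ℂ) * ((r ^ ((n:ℕ):ℝ) : ℝ) : ℂ) =
        ((r ^ ((k:ℝ) - w) : ℝ) : ℂ) := by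
      rw [← Complex.ofReal_mul, key2]
    rw [hPc, hRpow]
    push_cast
    rw [← key2c]
    push_cast
    ring
  -- limits of the main terms
  have hTlim : ∀ k ∈ Finset.range K, Tendsto (T k) atTop
      (𝓝 ((-1:ℂ)^k * gs k R *
        (((r ^ ((k:ℝ) - w) * (if k = 0 then (Real.Gamma w)⁻¹ else 0)) : ℝ) : ℂ))) := by
    intro k _
    have hreal := (gammk (w := w) k).const_mul (r ^ ((k:ℝ) - w))
    have hcast := (Complex.continuous_ofReal.tendsto _).comp hreal
    exact hcast.const_mul ((-1:ℂ)^k * gs k R)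
  -- limit of the remainder
  have hRemlim : Tendsto Rem atTop (𝓝 0) := by
    have hbound : ∀ᶠ n : ℕ in atTop, ‖Rem n‖ ≤ (M * r) * (n:ℝ) ^ (-w) := by
      filter_upwards [eventually_ge_atTop 1] with n hn
      obtain ⟨m, rfl⟩ : ∃ m, n = m + 1 := ⟨n - 1, by omega⟩
      have hm0 : (0:ℝ) < ((m:ℕ):ℝ) + 1 := by positivity
      have htc : tcoef E (m+1) = tcoef (deriv E) m / ((m:ℂ) + 1) := by
        rw [tcoef_deriv E m]
        have hmne : ((m:ℂ)+1) ≠ 0 := Nat.cast_add_one_ne_zero m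
        rw [mul_comm, mul_div_assoc, div_self hmne, mul_one]
      have hnorm_tc : ‖tcoef E (m+1)‖ = ‖tcoef (deriv E) m‖ / ((m:ℝ) + 1) := by
        rw [htc, norm_div]
        congr 1
        rw [show ((m:ℂ) + 1) = (((m:ℝ) + 1 : ℝ) : ℂ) by push_cast; ring]
        rw [Complex.norm_real, Real.norm_eq_abs, abs_of_pos hm0]
      have htcb : ‖tcoef (deriv E) m‖ ≤ M / r ^ m := by
        rw [le_div_iff₀ (by positivity)]
        exact hDbound m
      have hrpow_nat : r ^ (((m+1:ℕ)):ℝ) = r ^ (m+1 : ℕ) := by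
        rw [Real.rpow_natCast]
      have hnn : (0:ℝ) ≤ r ^ (((m+1:ℕ)):ℝ) * ((m+1:ℕ):ℝ) ^ (1 - w) := by positivity
      have hRemnorm : ‖Rem (m+1)‖ = ‖tcoef E (m+1)‖ *
          (r ^ (((m+1:ℕ)):ℝ) * ((m+1:ℕ):ℝ) ^ (1 - w)) := by
        rw [hRemdef]
        rw [norm_mul, Complex.norm_real, Real.norm_eq_abs, abs_of_nonneg hnn]
      rw [hRemnorm, hnorm_tc]
      have hsplit : ((m+1:ℕ):ℝ) ^ (1 - w) = (((m:ℝ)+1)) * ((m+1:ℕ):ℝ) ^ (-w) := by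
        have : ((m+1:ℕ):ℝ) = (m:ℝ) + 1 := by push_cast; ring
        rw [this]
        rw [show (1 - w) = 1 + (-w) by ring, Real.rpow_add hm0, Real.rpow_one]
      rw [hrpow_nat, hsplit]
      have hcalc : ‖tcoef (deriv E) m‖ / ((m:ℝ) + 1) *
          (r ^ (m+1:ℕ) * (((m:ℝ)+1) * ((m+1:ℕ):ℝ) ^ (-w))) =
          (‖tcoef (deriv E) m‖ * r ^ m) * (r * ((m+1:ℕ):ℝ) ^ (-w)) := by
        rw [pow_succ]
        field_simp
      rw [hcalc]
      have hfinal : (‖tcoef (deriv E) m‖ * r ^ m) * (r * ((m+1:ℕ):ℝ) ^ (-w)) ≤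
          M * (r * ((m+1:ℕ):ℝ) ^ (-w)) := by
        refine mul_le_mul_of_nonneg_right (hDbound m) ?_
        positivity
      calc (‖tcoef (deriv E) m‖ * r ^ m) * (r * ((m+1:ℕ):ℝ) ^ (-w)) ≤
            M * (r * ((m+1:ℕ):ℝ) ^ (-w)) := hfinal
        _ = (M * r) * ((m+1:ℕ):ℝ) ^ (-w) := by ring
    have hzero : Tendsto (fun n : ℕ => (M * r) * (n:ℝ) ^ (-w)) atTop (𝓝 0) := by
      have := ((tendsto_rpow_neg_atTop hw).comp
        (tendsto_natCast_atTop_atTop (R := ℝ))).const_mul (M * r)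
      rwa [mul_zero] at this
    exact squeeze_zero_norm' hbound hzero
  -- assemble
  have hsumlim := (tendsto_finset_sum (Finset.range K) hTlim).add hRemlim
  rw [add_zero] at hsumlim
  have hgoalfn : (fun n : ℕ => A n * ((q ^ (-(a * (n:ℝ))) * (n:ℝ) ^ (1 - w) : ℝ) : ℂ)) =
      fun n : ℕ => (∑ k ∈ Finset.range K, T k n) + Rem n := funext hpointwise
  rw [hgoalfn]
  have hvalue : (∑ k ∈ Finset.range K, (-1:ℂ)^k * gs k R *
      (((r ^ ((k:ℝ) - w) * (if k = 0 then (Real.Gamma w)⁻¹ else 0)) : ℝ) : ℂ)) =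
      g R * ((q ^ (a * w) / Real.Gamma w : ℝ) : ℂ) := by
    rw [Finset.sum_eq_single_of_mem 0 (Finset.mem_range.mpr (by omega))]
    · have h0 : ((0:ℕ):ℝ) - w = -w := by push_cast; ring
      rw [if_pos rfl, h0, pow_zero, one_mul, ← hgs0]
      congr 2
      rw [hrdef, ← Real.rpow_mul hq0.le, div_eq_mul_inv]
      congr 2
      ring
    · intro k _ hk
      rw [if_neg hk, mul_zero, Complex.ofReal_zero, mul_zero]
  rw [hvalue] at hsumlim
  exact hsumlim
end
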